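/- Let C be a monoidal category with associator a. Suppose given a contravariant functor D from C to C (a functor from C^op to C), written on objects as X ↦ X* and on morphisms f : X → Y as ᵗf : Y* → X*, together with a natural isomorphism c_{X,Y} : Y* ⊗ X* ≅ (X ⊗ Y)* satisfying the anti-multiplicativity hexagon: for all objects X, Y, Z, ᵗ(a_{Z,Y,X}) ∘ c_{Z, Y⊗X} ∘ (c_{Y,X} ⊗ id_{Z*}) = c_{Z⊗Y, X} ∘ (id_{X*} ⊗ c_{Z,Y}) ∘ a_{X*,Y*,Z*} as morphisms (X* ⊗ Y*) ⊗ Z* → ((Z⊗Y)⊗X)*. Then the covariant double-dual functor X ↦ X**, f ↦ ᵗ(ᵗf), equipped with the maps μ_{X,Y} := ᵗ(c_{X,Y})⁻¹ ∘ c_{Y*,X*} : X** ⊗ Y** → (Y* ⊗ X*)* → (X ⊗ Y)**, is multiplicative as a monoidal functor: each μ_{X,Y} is an isomorphism natural in X and Y, and the associativity coherence holds, i.e. for all X, Y, Z, ᵗᵗ(a_{X,Y,Z}) ∘ μ_{X⊗Y, Z} ∘ (μ_{X,Y} ⊗ id_{Z**}) = μ_{X, Y⊗Z} ∘ (id_{X**}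 ⊗ μ_{Y,Z}) ∘ a_{X**,Y**,Z**}. -/

import Mathlib

open CategoryTheory MonoidalCategory Opposite

/-- Given a monoidal category `C`, a contravariant functor `D : Cᵒᵖ ⥤ C`
(written `X ↦ X*`, `f ↦ ᵗf := D.map f.op`), and a natural family of isomorphisms
`c X Y : Y* ⊗ X* ≅ (X ⊗ Y)*` satisfying the anti-multiplicativity hexagon, the double dual
functor `X ↦ X**`, `f ↦ ᵗᵗf`, equipped with
`μ X Y := ᵗ(c X Y)⁻¹ ∘ c (Y*) (X*) : X** ⊗ Y** ⟶ (X ⊗ Y)**`, is multiplicative as a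
monoidal functor: each `μ X Y` is an isomorphism, `μ` is natural in `X` and `Y`, and the
associativity coherence holds. -/
theorem double_dual_is_multiplicative
    {C : Type*} [Category C] [MonoidalCategory C]
    (D : Cᵒᵖ ⥤ C)
    (c : ∀ X Y : C, D.obj (op Y) ⊗ D.obj (op X) ≅ D.obj (op (X ⊗ Y)))
    (hc_nat : ∀ {X X' Y Y' : C} (f : X ⟶ X') (g : Y ⟶ Y'),
      (D.map g.op ⊗ₘ D.map f.op) ≫ (c X Y).hom
        = (c X' Y').hom ≫ D.map (f ⊗ₘ g).op)
    (hc_hex : ∀ X Y Z : C,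
      ((c Y X).hom ⊗ₘ 𝟙 (D.obj (op Z))) ≫ (c Z (Y ⊗ X)).hom ≫ D.map (α_ Z Y X).hom.op
        = (α_ (D.obj (op X)) (D.obj (op Y)) (D.obj (op Z))).hom
            ≫ (𝟙 (D.obj (op X)) ⊗ₘ (c Z Y).hom) ≫ (c (Z ⊗ Y) X).hom) :
    -- the dual and double dual of objects and morphisms
    let star : C → C := fun X => D.obj (op X)
    let dstar : ∀ {X Y : C}, (X ⟶ Y) → (star (star X) ⟶ star (star Y)) :=
      fun f => D.map (D.map f.op).op
    -- the multiplicativity morphisms μ_{X,Y} = ᵗ(c_{X,Y})⁻¹ ∘ c_{Y*,X*}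
    let μ : ∀ X Y : C, star (star X) ⊗ star (star Y) ⟶ star (star (X ⊗ Y)) :=
      fun X Y => (c (star Y) (star X)).hom ≫ (D.mapIso (c X Y).op).inv
    -- each μ_{X,Y} is an isomorphism
    (∀ X Y : C, IsIso (μ X Y)) ∧
    -- μ is natural in X and Y
    (∀ {X X' Y Y' : C} (f : X ⟶ X') (g : Y ⟶ Y'),
      (dstar f ⊗ₘ dstar g) ≫ μ X' Y' = μ X Y ≫ dstar (f ⊗ₘ g)) ∧
    -- associativity coherence of the double dual functor
    (∀ X Y Z : C,
      (μ X Y ⊗ₘ 𝟙 (star (star Z))) ≫ μ (X ⊗ Y) Z ≫ dstar (α_ X Y Z).hom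
        = (α_ (star (star X)) (star (star Y)) (star (star Z))).hom
            ≫ (𝟙 (star (star X)) ⊗ₘ μ Y Z) ≫ μ X (Y ⊗ Z)) := by
  intro star dstar μ
  have Dop : ∀ {A B B' A' : C} {p : A ⟶ B} {q : B ⟶ A'} {r : A ⟶ B'} {s : B' ⟶ A'},
      p ≫ q = r ≫ s → D.map q.op ≫ D.map p.op = D.map s.op ≫ D.map r.op := by
    intro A B B' A' p q r s h
    rw [← D.map_comp, ← D.map_comp, ← op_comp, ← op_comp, h]
  have nat' : ∀ {X X' Y Y' : C} (f : X ⟶ X') (g : Y ⟶ Y'),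
      D.map (f ⊗ₘ g).op ≫ (c X Y).inv
        = (c X' Y').inv ≫ (D.map g.op ⊗ₘ D.map f.op) := by
    intro X X' Y Y' f g
    rw [← cancel_epi (c X' Y').hom, Iso.hom_inv_id_assoc, ← Category.assoc,
      ← hc_nat f g, Category.assoc, Iso.hom_inv_id, Category.comp_id]
  refine ⟨?_, ?_, ?_⟩
  · intro X Y
    dsimp only [μ]
    infer_instance
  · intro X X' Y Y' f g
    dsimp only [μ, dstar]
    simp only [Functor.mapIso_inv, Iso.op_inv]
    rw [← Category.assoc, hc_nat (D.map g.op) (D.map f.op), Category.assoc, Category.assoc]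
    congr 1
    exact Dop (nat' f g).symm
  · intro X Y Z
    have e1 := hc_nat (𝟙 (star Z)) (c X Y).inv
    have e2 := hc_nat (c Y Z).inv (𝟙 (star X))
    simp only [op_id] at e1 e2
    rw [D.map_id] at e1
    rw [D.map_id] at e2
    have e3 := hc_hex (star X) (star Y) (star Z)
    have key : (c X (Y ⊗ Z)).inv ≫ ((c Y Z).inv ⊗ₘ 𝟙 (star X))
          ≫ (α_ (star Z) (star Y) (star X)).hom
        = D.map (α_ X Y Z).hom.op ≫ (c (X ⊗ Y) Z).inv
          ≫ (𝟙 (star Z) ⊗ₘ (c X Y).inv) := by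
      have h := hc_hex Z Y X
      rw [← cancel_epi ((c X (Y ⊗ Z)).hom), ← cancel_epi ((c Y Z).hom ⊗ₘ 𝟙 (star X)),
        reassoc_of% h]
      simp only [Iso.hom_inv_id_assoc, tensorHom_comp_tensorHom_assoc, Iso.hom_inv_id, Category.id_comp,
        id_tensorHom_id, tensorHom_comp_tensorHom, Category.comp_id, star]
    have keyD : D.map (𝟙 (star Z) ⊗ₘ (c X Y).inv).op ≫ D.map ((c (X ⊗ Y) Z).inv).op
          ≫ D.map (D.map (α_ X Y Z).hom.op).op
        = D.map ((α_ (star Z) (star Y) (star X)).hom).op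
          ≫ D.map ((c Y Z).inv ⊗ₘ 𝟙 (star X)).op ≫ D.map ((c X (Y ⊗ Z)).inv).op := by
      simp only [← D.map_comp, ← op_comp, Category.assoc]
      rw [key]
    dsimp only [μ, dstar]
    simp only [Functor.mapIso_inv, Iso.op_inv]
    rw [comp_tensor_id, id_tensor_comp]
    slice_lhs 2 3 => rw [e1]
    slice_rhs 3 4 => rw [e2]
    simp only [Category.assoc]
    rw [keyD, ← reassoc_of% e3]
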